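/- Let G be an effective Hausdorff ample groupoid and R a commutative ring with unit. Then the convolution algebra RG is prime if and only if R is an integral domain and G is topologically transitive. -/

import Mathlib

universe u

/-- An étale topological groupoid: arrows form a topological space, units are
identified with idempotent arrows via the domain map `d` and range map `r`;
the domain map is a local homeomorphism. -/
structure EtaleGroupoid : Type (u + 1) where
  Arr : Type u
  top : TopologicalSpace Arr
  d : Arr → Arr
  r : Arr → Arr
  comp : Arr → Arr → Arr
  inv : Arr → Arr
  d_d : ∀ g, d (d g) = d g
  r_d : ∀ g, r (d g) = d g
  d_r : ∀ g, d (r g) = r g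
  r_r : ∀ g, r (r g) = r g
  d_comp : ∀ g h, d g = r h → d (comp g h) = d h
  r_comp : ∀ g h, d g = r h → r (comp g h) = r g
  comp_assoc : ∀ g h k, d g = r h → d h = r k → comp (comp g h) k = comp g (comp h k)
  comp_unit_right : ∀ g, comp g (d g) = g
  comp_unit_left : ∀ g, comp (r g) g = g
  d_inv : ∀ g, d (inv g) = r g
  r_inv : ∀ g, r (inv g) = d g
  inv_inv : ∀ g, inv (inv g) = g
  inv_comp : ∀ g, comp (inv g) g = d g
  comp_inv : ∀ g, comp g (inv g) = r g
  continuous_d : @Continuous Arr Arr top top d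
  continuous_r : @Continuous Arr Arr top top r
  continuous_inv : @Continuous Arr Arr top top inv
  continuous_comp : @Continuous {p : Arr × Arr // d p.1 = r p.2} Arr
    (@instTopologicalSpaceSubtype _ _ (@instTopologicalSpaceProd _ _ top top)) top
    (fun p => comp p.val.1 p.val.2)
  etale : ∀ g : Arr, ∃ U : Set Arr, @IsOpen Arr top U ∧ g ∈ U ∧ Set.InjOn d U ∧
    ∀ V, V ⊆ U → @IsOpen Arr top V → @IsOpen Arr top (d '' V)

instance (G : EtaleGroupoid) : TopologicalSpace G.Arr := G.top

namespace EtaleGroupoid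

variable (G : EtaleGroupoid)

/-- The unit space `G⁽⁰⁾`, identified with the set of unit arrows. -/
def units : Set G.Arr := Set.range G.d

/-- A subset of the unit space is invariant if it is a union of orbits. -/
def Invariant (X : Set G.Arr) : Prop := ∀ g : G.Arr, G.d g ∈ X → G.r g ∈ X

/-- The orbit of a unit `x`. -/
def orbit (x : G.Arr) : Set G.Arr := {y | ∃ g, G.d g = x ∧ G.r g = y}

/-- `U` is an open subset of the unit space (open in the subspace topology). -/
def UnitsOpen (U : Set G.Arr) : Prop :=
  U ⊆ G.units ∧ IsOpen (Subtype.val ⁻¹' U : Set ↥G.units)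

/-- `C` is a closed subset of the unit space (closed in the subspace topology). -/
def UnitsClosed (C : Set G.Arr) : Prop :=
  C ⊆ G.units ∧ IsClosed (Subtype.val ⁻¹' C : Set ↥G.units)

/-- `X` is dense in the unit space. -/
def UnitsDense (X : Set G.Arr) : Prop :=
  Dense (Subtype.val ⁻¹' X : Set ↥G.units)

/-- `X` is nowhere dense in the unit space. -/
def UnitsNowhereDense (X : Set G.Arr) : Prop :=
  interior (closure (Subtype.val ⁻¹' X : Set ↥G.units)) = ∅

/-- Topological transitivity: every non-empty open invariant subset of the
unit space is dense. -/
def TopTransitive : Prop :=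
  ∀ U : Set G.Arr, G.UnitsOpen U → G.Invariant U → U.Nonempty → G.UnitsDense U

end EtaleGroupoid

namespace EtaleGroupoid

variable (G : EtaleGroupoid)

/-- The underlying set of the groupoid convolution algebra `RG`: the `R`-span of
characteristic functions of compact open subsets of the arrow space. -/
def AlgebraSet (R : Type) [CommRing R] : Set (G.Arr → R) :=
  (Submodule.span R {f : G.Arr → R | ∃ U : Set G.Arr,
      IsCompact U ∧ IsOpen U ∧ f = Set.indicator U fun _ => (1 : R)} :
    Submodule R (G.Arr → R))

/-- Convolution: `(f ⋆ g)(x) = ∑_{d h = d x} f (x h⁻¹) g (h)`. -/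
noncomputable def conv {R : Type} [CommRing R] (f g : G.Arr → R) : G.Arr → R := fun x =>
  ∑ᶠ (h : G.Arr) (_ : G.d h = G.d x), f (G.comp x (G.inv h)) * g h

/-- The convolution algebra `RG` is a prime ring (elementwise formulation). -/
def AlgPrime (R : Type) [CommRing R] : Prop :=
  (∃ f ∈ G.AlgebraSet R, f ≠ 0) ∧
  ∀ f ∈ G.AlgebraSet R, ∀ g ∈ G.AlgebraSet R,
    (∀ h ∈ G.AlgebraSet R, G.conv (G.conv f h) g = 0) → f = 0 ∨ g = 0

/-- The convolution algebra `RG` is a semiprime ring (elementwise formulation). -/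
def AlgSemiprime (R : Type) [CommRing R] : Prop :=
  ∀ f ∈ G.AlgebraSet R, (∀ h ∈ G.AlgebraSet R, G.conv (G.conv f h) f = 0) → f = 0

/-- `X ⊆ G⁽⁰⁾` is `R`-dense: every non-zero element of `RG` is non-zero at some
arrow whose domain lies in `X`. -/
def RDense (R : Type) [CommRing R] (X : Set G.Arr) : Prop :=
  ∀ f ∈ G.AlgebraSet R, f ≠ (0 : G.Arr → R) → ∃ g : G.Arr, f g ≠ 0 ∧ G.d g ∈ X

/-- An étale groupoid is ample if its unit space is (locally compact) Hausdorff
with a basis of compact open sets. -/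
def Ample : Prop :=
  T2Space ↥G.units ∧
  ∀ x ∈ G.units, ∀ U : Set G.Arr, G.UnitsOpen U → x ∈ U →
    ∃ K : Set G.Arr, K ⊆ U ∧ x ∈ K ∧ IsCompact K ∧ G.UnitsOpen K

/-- A groupoid is effective if the interior of the isotropy bundle is the unit
space. -/
def Effective : Prop := interior {g : G.Arr | G.d g = G.r g} = G.units

end EtaleGroupoid

namespace EtaleGroupoid

variable {G : EtaleGroupoid}

lemma d_of_unit {u : G.Arr} (hu : u ∈ G.units) : G.d u = u := by
  obtain ⟨g, rfl⟩ := hu; rw [G.d_d]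

lemma mem_units_iff {u : G.Arr} : u ∈ G.units ↔ G.d u = u :=
  ⟨d_of_unit, fun h => ⟨u, h⟩⟩

lemma r_of_unit {u : G.Arr} (hu : u ∈ G.units) : G.r u = u := by
  obtain ⟨g, rfl⟩ := hu; rw [G.r_d]

lemma d_mem_units (g : G.Arr) : G.d g ∈ G.units := ⟨g, rfl⟩

lemma r_mem_units (g : G.Arr) : G.r g ∈ G.units := by
  rw [mem_units_iff, G.d_r]

lemma inv_of_unit {u : G.Arr} (hu : u ∈ G.units) : G.inv u = u := by
  have h1 : G.d (G.inv u) = u := by rw [G.d_inv, r_of_unit hu]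
  have := G.comp_unit_right (G.inv u)
  rw [h1] at this
  rw [← this, G.inv_comp, d_of_unit hu]

lemma inv_unique {w z : G.Arr} (h1 : G.comp w z = G.r w) (h2 : G.d w = G.r z) :
    z = G.inv w := by
  have hdi : G.d (G.inv w) = G.r w := G.d_inv w
  calc z = G.comp (G.r z) z := (G.comp_unit_left z).symm
    _ = G.comp (G.comp (G.inv w) w) z := by rw [← h2, ← G.inv_comp]
    _ = G.comp (G.inv w) (G.comp w z) := G.comp_assoc _ _ _ hdi h2
    _ = G.comp (G.inv w) (G.d (G.inv w)) := by rw [h1, hdi]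
    _ = G.inv w := G.comp_unit_right _

lemma inv_comp_eq {g h : G.Arr} (hgh : G.d g = G.r h) :
    G.inv (G.comp g h) = G.comp (G.inv h) (G.inv g) := by
  have hinvh : G.d h = G.r (G.inv h) := (G.r_inv h).symm
  have hinvg : G.d (G.inv h) = G.r (G.inv g) := by rw [G.d_inv, G.r_inv, hgh]
  refine (inv_unique ?_ ?_).symm
  · calc G.comp (G.comp g h) (G.comp (G.inv h) (G.inv g))
        = G.comp g (G.comp h (G.comp (G.inv h) (G.inv g))) := by
          refine G.comp_assoc _ _ _ hgh ?_
          rw [G.r_comp _ _ hinvg]; exact hinvh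
      _ = G.comp g (G.comp (G.comp h (G.inv h)) (G.inv g)) := by
          rw [G.comp_assoc _ _ _ hinvh hinvg]
      _ = G.comp g (G.comp (G.r h) (G.inv g)) := by rw [G.comp_inv]
      _ = G.comp g (G.inv g) := by rw [← hgh, ← G.r_inv g, G.comp_unit_left]
      _ = G.r g := G.comp_inv g
      _ = G.r (G.comp g h) := (G.r_comp _ _ hgh).symm
  · rw [G.d_comp _ _ hgh, G.r_comp _ _ hinvg]; exact hinvh

lemma units_eq_fixed : G.units = {x | G.d x = x} := by
  ext x; exact mem_units_iff

lemma isClosed_units [T2Space G.Arr] : IsClosed G.units := by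
  rw [units_eq_fixed]
  exact isClosed_eq G.continuous_d continuous_id

lemma isOpen_units (heff : G.Effective) : IsOpen G.units := by
  rw [← heff]; exact isOpen_interior

/-! ### convolution basics -/

variable {R : Type} [CommRing R]

open scoped Classical

lemma conv_apply' (F H : G.Arr → R) (x : G.Arr) :
    G.conv F H x = ∑ᶠ h, (if G.d h = G.d x then F (G.comp x (G.inv h)) * H h else 0) := by
  classical
  unfold conv
  exact finsum_congr fun h => finsum_eq_if

lemma conv_eq_zero_at {F H : G.Arr → R} {x : G.Arr}
    (hx : ∀ h, G.d h = G.d x → F (G.comp x (G.inv h)) * H h = 0) :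
    G.conv F H x = 0 := by
  rw [conv_apply']
  refine finsum_eq_zero_of_forall_eq_zero fun h => ?_
  split_ifs with hh
  · exact hx h hh
  · rfl

lemma conv_eq_single {F H : G.Arr → R} {x h₀ : G.Arr} (hd : G.d h₀ = G.d x)
    (huniq : ∀ h, G.d h = G.d x → F (G.comp x (G.inv h)) * H h ≠ 0 → h = h₀) :
    G.conv F H x = F (G.comp x (G.inv h₀)) * H h₀ := by
  classical
  rw [conv_apply']
  rw [finsum_eq_single _ h₀ ?_]
  · rw [if_pos hd]
  · intro h hne
    split_ifs with hh
    · by_contra hterm; exact hne (huniq h hh hterm)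
    · rfl

end EtaleGroupoid
namespace EtaleGroupoid

variable {G : EtaleGroupoid}

/-- shorthand for the characteristic function -/
noncomputable def chi (R : Type) [CommRing R] (U : Set G.Arr) : G.Arr → R :=
  Set.indicator U fun _ => (1 : R)

variable {R : Type} [CommRing R]

open scoped Classical

lemma chi_apply_mem {U : Set G.Arr} {x : G.Arr} (h : x ∈ U) : chi R U x = 1 :=
  Set.indicator_of_mem h _

lemma chi_apply_not_mem {U : Set G.Arr} {x : G.Arr} (h : x ∉ U) : chi R U x = 0 :=
  Set.indicator_of_notMem h _

lemma mem_of_chi_ne_zero {U : Set G.Arr} {x : G.Arr} (h : chi R U x ≠ 0) : x ∈ U := by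
  by_contra hx; exact h (chi_apply_not_mem hx)

lemma chi_mem_algebraSet {U : Set G.Arr} (hc : IsCompact U) (ho : IsOpen U) :
    chi R U ∈ G.AlgebraSet R :=
  Submodule.subset_span ⟨U, hc, ho, rfl⟩

lemma smul_chi_mem_algebraSet (a : R) {U : Set G.Arr} (hc : IsCompact U) (ho : IsOpen U) :
    (fun z => a * chi R U z) ∈ G.AlgebraSet R := by
  have : (fun z => a * chi R U z) = a • (chi R U : G.Arr → R) := by
    funext z; simp [Pi.smul_apply, smul_eq_mul]
  rw [this]
  exact Submodule.smul_mem _ _ (chi_mem_algebraSet hc ho)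

/-- convolving on the right with the indicator of a set of units -/
lemma conv_chi_units_right (F : G.Arr → R) {W : Set G.Arr} (hW : W ⊆ G.units) (x : G.Arr) :
    G.conv F (chi R W) x = if G.d x ∈ W then F x else 0 := by
  classical
  by_cases hx : G.d x ∈ W
  · rw [if_pos hx]
    rw [conv_eq_single (h₀ := G.d x) (G.d_d x) ?_]
    · rw [chi_apply_mem hx, mul_one, inv_of_unit (d_mem_units x), G.comp_unit_right]
    · intro h hh hterm
      have hmem : h ∈ W := mem_of_chi_ne_zero fun h0 => hterm (by rw [h0, mul_zero])
      rw [← hh]; exact (d_of_unit (hW hmem)).symm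
  · rw [if_neg hx]
    refine conv_eq_zero_at fun h hh => ?_
    have : chi R W h = 0 := by
      refine chi_apply_not_mem fun hmem => hx ?_
      rwa [← hh, d_of_unit (hW hmem)] at hx ⊢
    rw [this, mul_zero]

lemma unit_factor_eq {x h : G.Arr} (hh : G.d h = G.d x)
    (hu : G.comp x (G.inv h) ∈ G.units) : h = x ∧ G.comp x (G.inv h) = G.r x := by
  have hco : G.d x = G.r (G.inv h) := by rw [G.r_inv, hh]
  have hdu : G.d (G.comp x (G.inv h)) = G.r h := by rw [G.d_comp _ _ hco, G.d_inv]
  have hru : G.r (G.comp x (G.inv h)) = G.r x := G.r_comp _ _ hco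
  have huu : G.comp x (G.inv h) = G.r h := by rw [← hdu, d_of_unit hu]
  have hx : G.comp (G.comp x (G.inv h)) h = x := by
    rw [G.comp_assoc _ _ _ hco (by rw [G.d_inv]), G.inv_comp, hh, G.comp_unit_right]
  constructor
  · rw [huu, G.comp_unit_left] at hx; exact hx
  · rw [← hru, r_of_unit hu]
lemma conv_chi_units_left (F : G.Arr → R) {W : Set G.Arr} (hW : W ⊆ G.units) (x : G.Arr) :
    G.conv (chi R W) F x = if G.r x ∈ W then F x else 0 := by
  classical
  by_cases hx : G.r x ∈ W
  · rw [if_pos hx]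
    rw [conv_eq_single (h₀ := x) rfl ?_]
    · rw [G.comp_inv, chi_apply_mem hx, one_mul]
    · intro h hh hterm
      have hmem : G.comp x (G.inv h) ∈ W :=
        mem_of_chi_ne_zero (R := R) fun h0 => hterm (by rw [h0, zero_mul])
      exact (unit_factor_eq hh (hW hmem)).1
  · rw [if_neg hx]
    refine conv_eq_zero_at fun h hh => ?_
    have : chi R W (G.comp x (G.inv h)) = 0 := by
      refine chi_apply_not_mem fun hmem => ?_
      have := (unit_factor_eq hh (hW hmem)).2
      rw [this] at hmem; exact hx hmem
    rw [this, zero_mul]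

/-- every element of the algebra has compact support -/
lemma exists_compact_support {f : G.Arr → R} (hf : f ∈ G.AlgebraSet R) :
    ∃ K : Set G.Arr, IsCompact K ∧ ∀ x, f x ≠ 0 → x ∈ K := by
  refine Submodule.span_induction ?_ ?_ ?_ ?_ hf
  · rintro f ⟨U, hUc, _, rfl⟩
    exact ⟨U, hUc, fun x hx => by
      by_contra h; exact hx (Set.indicator_of_notMem h _)⟩
  · exact ⟨∅, isCompact_empty, fun x hx => absurd rfl hx⟩
  · rintro f g - - ⟨K, hK, hKs⟩ ⟨L, hL, hLs⟩
    refine ⟨K ∪ L, hK.union hL, fun x hx => ?_⟩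
    by_contra h
    rw [Set.mem_union] at h
    push_neg at h
    have h1 : f x = 0 := by by_contra h'; exact h.1 (hKs x h')
    have h2 : g x = 0 := by by_contra h'; exact h.2 (hLs x h')
    exact hx (by simp [Pi.add_apply, h1, h2])
  · rintro a f - ⟨K, hK, hKs⟩
    exact ⟨K, hK, fun x hx => hKs x fun h => hx (by simp [Pi.smul_apply, h])⟩

/-- compact sets meet each `d`-fibre in a finite set -/
lemma fiber_finite {K : Set G.Arr} (hK : IsCompact K) (x : G.Arr) :
    {h : G.Arr | h ∈ K ∧ G.d h = x}.Finite := by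
  choose U hUo hmem hinj _ using G.etale
  obtain ⟨t, ht⟩ := hK.elim_finite_subcover U hUo (fun g hg => Set.mem_iUnion.2 ⟨g, hmem g⟩)
  have hsub : {h : G.Arr | h ∈ K ∧ G.d h = x} ⊆ ⋃ i ∈ t, {h | h ∈ U i ∧ h ∈ K ∧ G.d h = x} := by
    intro h hh
    obtain ⟨i, hit, hiU⟩ := Set.mem_iUnion₂.1 (ht hh.1)
    exact Set.mem_iUnion₂.2 ⟨i, hit, hiU, hh⟩
  refine Set.Finite.subset (Set.Finite.biUnion t.finite_toSet fun i _ => ?_) hsub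
  refine Set.Subsingleton.finite fun a ha b hb => ?_
  exact hinj i ha.1 hb.1 (by rw [ha.2.2, hb.2.2])

lemma fiber_support_finite {h : G.Arr → R} (hh : h ∈ G.AlgebraSet R) (y : G.Arr) :
    {k : G.Arr | G.d k = G.d y ∧ h k ≠ 0}.Finite := by
  obtain ⟨K, hK, hKs⟩ := exists_compact_support hh
  refine Set.Finite.subset (fiber_finite hK (G.d y)) fun k hk => ⟨hKs k hk.2, hk.1⟩

lemma conv_mul_right_eq_zero {a b : R} (hab : a * b = 0) (F H : G.Arr → R)
    (hfin : ∀ y : G.Arr, {k : G.Arr | G.d k = G.d y ∧ H k ≠ 0}.Finite) (y : G.Arr) :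
    G.conv (fun z => a * F z) H y * b = 0 := by
  classical
  rw [conv_apply']
  rw [finsum_mul' _ _ ?_]
  · refine finsum_eq_zero_of_forall_eq_zero fun k => ?_
    split_ifs with hk
    · have : a * F (G.comp y (G.inv k)) * H k * b
          = a * b * (F (G.comp y (G.inv k)) * H k) := by ring
      rw [this, hab, zero_mul]
    · exact zero_mul b
  · refine Set.Finite.subset (hfin y) fun k hk => ?_
    simp only [Function.mem_support] at hk
    by_cases h1 : G.d k = G.d y
    · refine ⟨h1, fun h0 => hk ?_⟩
      rw [if_pos h1, h0, mul_zero]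
    · exact absurd (if_neg h1) hk

end EtaleGroupoid
namespace EtaleGroupoid

variable {G : EtaleGroupoid}

lemma preimage_val_units : (Subtype.val ⁻¹' G.units : Set ↥G.units) = Set.univ := by
  ext x; simpa using x.2

lemma unitsOpen_units : G.UnitsOpen G.units :=
  ⟨subset_rfl, by rw [preimage_val_units]; exact isOpen_univ⟩

lemma isOpen_of_unitsOpen (heff : G.Effective) {U : Set G.Arr} (hU : G.UnitsOpen U) :
    IsOpen U := by
  have : U = Subtype.val '' (Subtype.val ⁻¹' U : Set ↥G.units) := by
    rw [Subtype.image_preimage_coe]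
    exact (Set.inter_eq_self_of_subset_right hU.1).symm
  rw [this]
  exact (isOpen_units heff).isOpenMap_subtype_val _ hU.2

lemma unitsOpen_of_isOpen {U : Set G.Arr} (hsub : U ⊆ G.units) (hU : IsOpen U) :
    G.UnitsOpen U :=
  ⟨hsub, hU.preimage continuous_subtype_val⟩

lemma exists_compact_open (hample : G.Ample) (heff : G.Effective) {U : Set G.Arr}
    {x : G.Arr} (hU : G.UnitsOpen U) (hx : x ∈ U) :
    ∃ K : Set G.Arr, K ⊆ U ∧ x ∈ K ∧ IsCompact K ∧ K ⊆ G.units ∧ IsOpen K := by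
  obtain ⟨K, hKU, hxK, hKc, hKo⟩ := hample.2 x (hU.1 hx) U hU hx
  exact ⟨K, hKU, hxK, hKc, hKo.1, isOpen_of_unitsOpen heff hKo⟩

variable {R : Type} [CommRing R]

open scoped Classical

theorem algPrime_forward (hample : G.Ample) (heff : G.Effective) (hne : G.units.Nonempty)
    (hp : G.AlgPrime R) : IsDomain R ∧ G.TopTransitive := by
  -- nontriviality
  obtain ⟨f0, -, hf0⟩ := hp.1
  obtain ⟨z0, hz0⟩ := Function.ne_iff.mp hf0
  haveI : Nontrivial R := ⟨⟨f0 z0, 0, by simpa using hz0⟩⟩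
  -- a compact open subset of the unit space containing a given unit
  obtain ⟨u0, hu0⟩ := hne
  obtain ⟨K0, -, hu0K, hK0c, hK0u, hK0o⟩ :=
    exists_compact_open hample heff unitsOpen_units hu0
  haveI : NoZeroDivisors R := by
    constructor
    intro a b hab
    by_contra hcon
    push_neg at hcon
    obtain ⟨ha, hb⟩ := hcon
    have hfmem := smul_chi_mem_algebraSet (G := G) (R := R) a hK0c hK0o
    have hgmem := smul_chi_mem_algebraSet (G := G) (R := R) b hK0c hK0o
    have hzero : ∀ h ∈ G.AlgebraSet R,
        G.conv (G.conv (fun z => a * chi R K0 z) h) (fun z => b * chi R K0 z) = 0 := by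
      intro h hh
      funext x
      show G.conv _ _ x = 0
      refine conv_eq_zero_at fun k hk => ?_
      have hmul := conv_mul_right_eq_zero hab (chi R K0) h
        (fun y => fiber_support_finite hh y) (G.comp x (G.inv k))
      calc G.conv (fun z => a * chi R K0 z) h (G.comp x (G.inv k)) * (b * chi R K0 k)
          = (G.conv (fun z => a * chi R K0 z) h (G.comp x (G.inv k)) * b) * chi R K0 k := by
            ring
        _ = 0 := by rw [hmul, zero_mul]
    rcases hp.2 _ hfmem _ hgmem hzero with h0 | h0
    · have := congrFun h0 u0
      rw [chi_apply_mem hu0K, mul_one] at this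
      exact ha this
    · have := congrFun h0 u0
      rw [chi_apply_mem hu0K, mul_one] at this
      exact hb this
  refine ⟨NoZeroDivisors.to_isDomain R, ?_⟩
  -- topological transitivity
  intro U hU hinv hUne
  by_contra hnd
  have hev : ∃ v : ↥G.units, v ∉ closure (Subtype.val ⁻¹' U : Set ↥G.units) := by
    by_contra h
    push_neg at h
    exact hnd h
  obtain ⟨v, hv⟩ := hev
  rw [mem_closure_iff] at hv
  push_neg at hv
  obtain ⟨V, hVo, hvV, hVU⟩ := hv
  have hWopen : G.UnitsOpen (Subtype.val '' V) := by
    refine ⟨fun x hx => ?_, ?_⟩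
    · obtain ⟨y, -, rfl⟩ := hx; exact y.2
    · rw [Set.preimage_image_eq _ Subtype.val_injective]; exact hVo
  obtain ⟨K, hKW, hvK, hKc, hKu, hKo⟩ :=
    exists_compact_open hample heff hWopen ⟨v, hvV, rfl⟩
  have hKU : ∀ x, x ∈ K → x ∉ U := by
    intro x hxK hxU
    obtain ⟨y, hyV, rfl⟩ := hKW hxK
    have : y ∈ V ∩ (Subtype.val ⁻¹' U : Set ↥G.units) := ⟨hyV, hxU⟩
    rw [hVU] at this
    exact this
  obtain ⟨x0, hx0⟩ := hUne
  obtain ⟨L, hLU, hx0L, hLc, hLu, hLo⟩ := exists_compact_open hample heff hU hx0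
  have hzero : ∀ h ∈ G.AlgebraSet R, G.conv (G.conv (chi R L) h) (chi R K) = 0 := by
    intro h hh
    funext x
    show G.conv _ _ x = 0
    rw [conv_chi_units_right _ hKu]
    split_ifs with hdx
    · rw [conv_chi_units_left _ hLu]
      split_ifs with hrx
      · exfalso
        have h1 : G.r x ∈ U := hLU hrx
        have h2 : G.d (G.inv x) ∈ U := by rwa [G.d_inv]
        have h3 : G.d x ∈ U := by have := hinv _ h2; rwa [G.r_inv] at this
        exact hKU _ hdx h3
      · rfl
    · rfl
  rcases hp.2 _ (chi_mem_algebraSet hLc hLo) _ (chi_mem_algebraSet hKc hKo) hzero with h0 | h0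
  · have := congrFun h0 x0
    rw [chi_apply_mem hx0L] at this
    exact one_ne_zero this
  · have := congrFun h0 v.val
    rw [chi_apply_mem hvK] at this
    exact one_ne_zero this

end EtaleGroupoid
namespace EtaleGroupoid

variable {G : EtaleGroupoid}

lemma comp_inv_cancel_right {z w : G.Arr} (h : G.d z = G.r w) :
    G.comp (G.comp z w) (G.inv w) = z := by
  rw [G.comp_assoc _ _ _ h (G.r_inv w).symm, G.comp_inv, ← h, G.comp_unit_right]

lemma inv_comp_cancel_left {w z : G.Arr} (h : G.d w = G.r z) :
    G.comp (G.inv w) (G.comp w z) = z := by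
  rw [← G.comp_assoc _ _ _ (by rw [G.d_inv]) h, G.inv_comp, h, G.comp_unit_left]

/-- A compact open bisection with open and injective source and range maps. -/
def IsBis (G : EtaleGroupoid) (B : Set G.Arr) : Prop :=
  IsCompact B ∧ IsOpen B ∧ Set.InjOn G.d B ∧ Set.InjOn G.r B ∧
  (∀ V ⊆ B, IsOpen V → IsOpen (G.d '' V)) ∧ (∀ V ⊆ B, IsOpen V → IsOpen (G.r '' V))

lemma inv_image_eq_preimage (B : Set G.Arr) : G.inv '' B = G.inv ⁻¹' B := by
  ext x
  constructor
  · rintro ⟨b, hb, rfl⟩; simpa [G.inv_inv] using hb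
  · intro hx; exact ⟨G.inv x, hx, G.inv_inv x⟩

lemma image_inv_inv (B : Set G.Arr) : G.inv '' (G.inv '' B) = B := by
  rw [Set.image_image]
  simp [G.inv_inv]

lemma d_image_inv (V : Set G.Arr) : G.d '' (G.inv '' V) = G.r '' V := by
  rw [Set.image_image]
  exact Set.image_congr fun x _ => G.d_inv x

lemma r_image_inv (V : Set G.Arr) : G.r '' (G.inv '' V) = G.d '' V := by
  rw [Set.image_image]
  exact Set.image_congr fun x _ => G.r_inv x

lemma IsBis.inv {B : Set G.Arr} (hB : G.IsBis B) : G.IsBis (G.inv '' B) := by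
  obtain ⟨hc, ho, hdi, hri, hdo, hro⟩ := hB
  have hinvopen : IsOpen (G.inv '' B) := by
    rw [inv_image_eq_preimage]; exact ho.preimage G.continuous_inv
  refine ⟨hc.image G.continuous_inv, hinvopen, ?_, ?_, ?_, ?_⟩
  · rintro x1 ⟨b1, hb1, rfl⟩ x2 ⟨b2, hb2, rfl⟩ h
    rw [G.d_inv, G.d_inv] at h
    rw [hri hb1 hb2 h]
  · rintro x1 ⟨b1, hb1, rfl⟩ x2 ⟨b2, hb2, rfl⟩ h
    rw [G.r_inv, G.r_inv] at h
    rw [hdi hb1 hb2 h]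
  · intro V hV hVo
    have : V = G.inv '' (G.inv '' V) := (image_inv_inv V).symm
    rw [this, d_image_inv]
    refine hro _ ?_ ?_
    · intro z hz
      obtain ⟨y, hy, rfl⟩ := hz
      obtain ⟨b, hb, rfl⟩ := hV hy
      rwa [G.inv_inv]
    · rw [inv_image_eq_preimage]; exact hVo.preimage G.continuous_inv
  · intro V hV hVo
    have : V = G.inv '' (G.inv '' V) := (image_inv_inv V).symm
    rw [this, r_image_inv]
    refine hdo _ ?_ ?_
    · intro z hz
      obtain ⟨y, hy, rfl⟩ := hz
      obtain ⟨b, hb, rfl⟩ := hV hy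
      rwa [G.inv_inv]
    · rw [inv_image_eq_preimage]; exact hVo.preimage G.continuous_inv

lemma isBis_of_units {W : Set G.Arr} (hu : W ⊆ G.units) (hc : IsCompact W)
    (ho : IsOpen W) : G.IsBis W := by
  have hd : ∀ V ⊆ W, G.d '' V = V := by
    intro V hV
    ext x
    constructor
    · rintro ⟨y, hy, rfl⟩; rwa [d_of_unit (hu (hV hy))]
    · intro hx; exact ⟨x, hx, d_of_unit (hu (hV hx))⟩
  have hr : ∀ V ⊆ W, G.r '' V = V := by
    intro V hV
    ext x
    constructor
    · rintro ⟨y, hy, rfl⟩; rwa [r_of_unit (hu (hV hy))]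
    · intro hx; exact ⟨x, hx, r_of_unit (hu (hV hx))⟩
  refine ⟨hc, ho, ?_, ?_, ?_, ?_⟩
  · intro x hx y hy h; rwa [d_of_unit (hu hx), d_of_unit (hu hy)] at h
  · intro x hx y hy h; rwa [r_of_unit (hu hx), r_of_unit (hu hy)] at h
  · intro V hV hVo; rwa [hd V hV]
  · intro V hV hVo; rwa [hr V hV]

/-- Packaged local structure of the source map on a chart. -/
lemma chart_pack {B₀ : Set G.Arr} (hBo : IsOpen B₀) (hinj : Set.InjOn G.d B₀)
    (hop : ∀ V ⊆ B₀, IsOpen V → IsOpen (G.d '' V)) :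
    ∃ σ : G.Arr → G.Arr, ContinuousOn σ (G.d '' B₀) ∧
      (∀ u ∈ G.d '' B₀, σ u ∈ B₀ ∧ G.d (σ u) = u) ∧
      (∀ K : Set G.Arr, IsCompact K → K ⊆ G.d '' B₀ → IsCompact (B₀ ∩ G.d ⁻¹' K)) := by
  classical
  set T := G.d '' B₀ with hT
  let f : ↥B₀ → ↥T := fun b => ⟨G.d b.val, ⟨b.val, b.2, rfl⟩⟩
  have hfc : Continuous f :=
    Continuous.subtype_mk (G.continuous_d.comp continuous_subtype_val) _
  have hfinj : Function.Injective f := fun a b h =>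
    Subtype.ext (hinj a.2 b.2 (congrArg Subtype.val h))
  have hfsurj : Function.Surjective f := by
    rintro ⟨u, b, hb, rfl⟩; exact ⟨⟨b, hb⟩, rfl⟩
  have hfopen : IsOpenMap f := by
    intro O hO
    have h1 : IsOpen (Subtype.val '' O) := hBo.isOpenMap_subtype_val O hO
    have h2 : IsOpen (G.d '' (Subtype.val '' O)) :=
      hop _ (by rintro y ⟨o, ho, rfl⟩; exact o.2) h1
    have heq : f '' O = Subtype.val ⁻¹' (G.d '' (Subtype.val '' O)) := by
      ext ⟨u, hu⟩
      constructor
      · rintro ⟨o, ho, heq⟩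
        exact ⟨o.val, ⟨o, ho, rfl⟩, congrArg Subtype.val heq⟩
      · rintro ⟨y, ⟨o, ho, rfl⟩, (h : G.d o.val = u)⟩
        exact ⟨o, ho, Subtype.ext h⟩
    rw [heq]
    exact h2.preimage continuous_subtype_val
  let E := Equiv.ofBijective f ⟨hfinj, hfsurj⟩
  let e := E.toHomeomorphOfContinuousOpen hfc hfopen
  have hes : ∀ y : ↥T, (e.symm y).val ∈ B₀ ∧ G.d ((e.symm y).val) = y.val := by
    intro y
    refine ⟨(e.symm y).2, ?_⟩
    have : f (E.symm y) = y := E.apply_symm_apply y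
    have := congrArg Subtype.val this
    exact this
  set σfun : G.Arr → G.Arr := fun u => if h : u ∈ T then (e.symm ⟨u, h⟩).val else u
    with hσfun
  have hval : ∀ (u : G.Arr) (hu : u ∈ T), σfun u = (e.symm ⟨u, hu⟩).val := by
    intro u hu
    rw [hσfun]
    exact dif_pos hu
  refine ⟨σfun, ?_, ?_, ?_⟩
  · rw [continuousOn_iff_continuous_restrict]
    have : Set.domRestrict T σfun = fun y : ↥T => (e.symm y).val := by
      funext y
      exact hval y.val y.2
    rw [this]
    exact continuous_subtype_val.comp e.symm.continuous
  · intro u hu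
    rw [hval u hu]
    exact hes ⟨u, hu⟩
  · intro K hK hKsub
    have hKpre : IsCompact (Subtype.val ⁻¹' K : Set ↥T) := by
      rw [Topology.IsEmbedding.subtypeVal.isCompact_iff]
      have : Subtype.val '' (Subtype.val ⁻¹' K : Set ↥T) = K := by
        rw [Subtype.image_preimage_coe]
        exact Set.inter_eq_self_of_subset_right hKsub
      rwa [this]
    have himg : IsCompact (Subtype.val '' (e.symm '' (Subtype.val ⁻¹' K : Set ↥T))) :=
      ((hKpre.image e.symm.continuous).image continuous_subtype_val)
    have heq : B₀ ∩ G.d ⁻¹' K = Subtype.val '' (e.symm '' (Subtype.val ⁻¹' K : Set ↥T)) := by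
      ext x
      constructor
      · rintro ⟨hxB, hxK⟩
        refine ⟨e.symm ⟨G.d x, ⟨x, hxB, rfl⟩⟩, ⟨⟨G.d x, ⟨x, hxB, rfl⟩⟩, hxK, rfl⟩, ?_⟩
        have : e.symm (f ⟨x, hxB⟩) = ⟨x, hxB⟩ := e.symm_apply_apply ⟨x, hxB⟩
        have h2 := congrArg Subtype.val this
        exact h2
      · rintro ⟨b, ⟨y, hyK, rfl⟩, rfl⟩
        refine ⟨(hes y).1, Set.mem_preimage.2 ?_⟩
        rw [(hes y).2]
        exact hyK
    rw [heq]
    exact himg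

/-- pre-bisection charts around any point inside any open set -/
lemma exists_preBis {x : G.Arr} {N : Set G.Arr} (hNo : IsOpen N) (hx : x ∈ N) :
    ∃ B₀ : Set G.Arr, IsOpen B₀ ∧ x ∈ B₀ ∧ B₀ ⊆ N ∧ Set.InjOn G.d B₀ ∧
      Set.InjOn G.r B₀ ∧ (∀ V ⊆ B₀, IsOpen V → IsOpen (G.d '' V)) ∧
      (∀ V ⊆ B₀, IsOpen V → IsOpen (G.r '' V)) := by
  obtain ⟨U₁, hU₁o, hxU₁, hU₁i, hU₁d⟩ := G.etale x
  obtain ⟨U₂, hU₂o, hxU₂, hU₂i, hU₂d⟩ := G.etale (G.inv x)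
  refine ⟨U₁ ∩ G.inv ⁻¹' U₂ ∩ N, ?_, ⟨⟨hxU₁, hxU₂⟩, hx⟩, fun y hy => hy.2, ?_, ?_, ?_, ?_⟩
  · exact ((hU₁o.inter (hU₂o.preimage G.continuous_inv)).inter hNo)
  · exact hU₁i.mono fun y hy => hy.1.1
  · intro y1 h1 y2 h2 hr
    have e1 : G.d (G.inv y1) = G.d (G.inv y2) := by rw [G.d_inv, G.d_inv, hr]
    have := hU₂i h1.1.2 h2.1.2 e1
    have := congrArg G.inv this
    rwa [G.inv_inv, G.inv_inv] at this
  · intro V hV hVo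
    exact hU₁d V (fun y hy => (hV hy).1.1) hVo
  · intro V hV hVo
    have : G.r '' V = G.d '' (G.inv '' V) := (d_image_inv V).symm
    rw [this]
    refine hU₂d _ ?_ ?_
    · rintro z ⟨y, hy, rfl⟩; exact (hV hy).1.2
    · rw [inv_image_eq_preimage]; exact hVo.preimage G.continuous_inv

lemma d_image_subset_units (B : Set G.Arr) : G.d '' B ⊆ G.units := by
  rintro u ⟨b, -, rfl⟩; exact d_mem_units b

lemma r_image_subset_units (B : Set G.Arr) : G.r '' B ⊆ G.units := by
  rintro u ⟨b, -, rfl⟩; exact r_mem_units b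

/-- compact open bisections form a basis of the arrow space -/
lemma exists_isBis_basis (hample : G.Ample) (heff : G.Effective) {x : G.Arr}
    {N : Set G.Arr} (hNo : IsOpen N) (hx : x ∈ N) :
    ∃ B : Set G.Arr, G.IsBis B ∧ x ∈ B ∧ B ⊆ N := by
  obtain ⟨B₀, hBo, hxB, hBN, hdi, hri, hdo, hro⟩ := exists_preBis hNo hx
  obtain ⟨σ, hσc, hσ, hcpt⟩ := chart_pack hBo hdi hdo
  have hTopen : IsOpen (G.d '' B₀) := hdo B₀ subset_rfl hBo
  have hTunits : G.d '' B₀ ⊆ G.units := d_image_subset_units B₀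
  obtain ⟨K, hKT, hdxK, hKc, hKu, hKo⟩ := exists_compact_open hample heff
    (unitsOpen_of_isOpen hTunits hTopen) ⟨x, hxB, rfl⟩
  refine ⟨B₀ ∩ G.d ⁻¹' K, ⟨?_, ?_, ?_, ?_, ?_, ?_⟩, ⟨hxB, hdxK⟩, fun y hy => hBN hy.1⟩
  · exact hcpt K hKc hKT
  · exact hBo.inter (hKo.preimage G.continuous_d)
  · exact hdi.mono fun y hy => hy.1
  · exact hri.mono fun y hy => hy.1
  · intro V hV hVo; exact hdo V (fun y hy => (hV hy).1) hVo
  · intro V hV hVo; exact hro V (fun y hy => (hV hy).1) hVo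

/-! ### products of subsets -/

def mulSet (G : EtaleGroupoid) (A B : Set G.Arr) : Set G.Arr :=
  (fun p : G.Arr × G.Arr => G.comp p.1 p.2) '' {p | p.1 ∈ A ∧ p.2 ∈ B ∧ G.d p.1 = G.r p.2}

lemma mem_mulSet {A B : Set G.Arr} {z : G.Arr} :
    z ∈ mulSet G A B ↔ ∃ a ∈ A, ∃ b ∈ B, G.d a = G.r b ∧ z = G.comp a b := by
  constructor
  · rintro ⟨⟨a, b⟩, ⟨ha, hb, hco⟩, rfl⟩; exact ⟨a, ha, b, hb, hco, rfl⟩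
  · rintro ⟨a, ha, b, hb, hco, rfl⟩; exact ⟨⟨a, b⟩, ⟨ha, hb, hco⟩, rfl⟩

lemma continuousOn_comp :
    ContinuousOn (fun p : G.Arr × G.Arr => G.comp p.1 p.2) {p | G.d p.1 = G.r p.2} := by
  rw [continuousOn_iff_continuous_restrict]
  exact G.continuous_comp

lemma mulSet_compact [T2Space G.Arr] {A B : Set G.Arr} (hA : IsCompact A)
    (hB : IsCompact B) : IsCompact (mulSet G A B) := by
  have hset : {p : G.Arr × G.Arr | p.1 ∈ A ∧ p.2 ∈ B ∧ G.d p.1 = G.r p.2}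
      = (A ×ˢ B) ∩ {p | G.d p.1 = G.r p.2} := by
    ext p; constructor
    · rintro ⟨h1, h2, h3⟩; exact ⟨⟨h1, h2⟩, h3⟩
    · rintro ⟨⟨h1, h2⟩, h3⟩; exact ⟨h1, h2, h3⟩
  have h1 : IsCompact ((A ×ˢ B) ∩ {p : G.Arr × G.Arr | G.d p.1 = G.r p.2}) :=
    (hA.prod hB).inter_right
      (isClosed_eq (G.continuous_d.comp continuous_fst) (G.continuous_r.comp continuous_snd))
  have h2 := h1.image_of_continuousOn (continuousOn_comp.mono fun p hp => hp.2)
  unfold mulSet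
  rw [hset]
  exact h2

lemma mulSet_isOpen_right {A B : Set G.Arr} (hA : IsOpen A) (hB : G.IsBis B) :
    IsOpen (mulSet G A B) := by
  obtain ⟨σ, hσc, hσ, -⟩ := chart_pack hB.2.1 hB.2.2.1 hB.2.2.2.2.1
  have hTopen : IsOpen (G.d '' B) := hB.2.2.2.2.1 B subset_rfl hB.2.1
  set O := G.d ⁻¹' (G.d '' B) with hO
  have hOopen : IsOpen O := hTopen.preimage G.continuous_d
  have hσd : ContinuousOn (fun z => σ (G.d z)) O :=
    hσc.comp G.continuous_d.continuousOn fun z hz => hz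
  have hpair : ContinuousOn (fun z => (z, G.inv (σ (G.d z)))) O :=
    ContinuousOn.prodMk continuousOn_id (G.continuous_inv.comp_continuousOn hσd)
  have hmaps : ∀ z ∈ O, (z, G.inv (σ (G.d z))) ∈ {p : G.Arr × G.Arr | G.d p.1 = G.r p.2} := by
    intro z hz
    show G.d z = G.r (G.inv (σ (G.d z)))
    rw [G.r_inv, (hσ _ hz).2]
  have hΨ : ContinuousOn (fun z => G.comp z (G.inv (σ (G.d z)))) O := by
    exact continuousOn_comp.comp hpair hmaps
  have key : mulSet G A B = O ∩ (fun z => G.comp z (G.inv (σ (G.d z)))) ⁻¹' A := by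
    ext z
    constructor
    · intro hz
      obtain ⟨a, ha, b, hb, hco, rfl⟩ := mem_mulSet.1 hz
      have hdz : G.d (G.comp a b) = G.d b := G.d_comp a b hco
      have hzO : G.comp a b ∈ O := by rw [hO, Set.mem_preimage, hdz]; exact ⟨b, hb, rfl⟩
      refine ⟨hzO, ?_⟩
      have hσb : σ (G.d (G.comp a b)) = b := by
        refine hB.2.2.1 (hσ _ hzO).1 hb ?_
        rw [(hσ _ hzO).2, hdz]
      show G.comp (G.comp a b) (G.inv (σ (G.d (G.comp a b)))) ∈ A
      rw [hσb, comp_inv_cancel_right hco]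
      exact ha
    · rintro ⟨hzO, hzA⟩
      set b := σ (G.d z) with hb
      have hbB : b ∈ B := (hσ _ hzO).1
      have hdb : G.d b = G.d z := (hσ _ hzO).2
      refine mem_mulSet.2 ⟨G.comp z (G.inv b), hzA, b, hbB, ?_, ?_⟩
      · rw [G.d_comp _ _ (by rw [G.r_inv, hdb]), G.d_inv]
      · have h5 := comp_inv_cancel_right (z := z) (w := G.inv b) (by rw [G.r_inv, hdb])
        rw [G.inv_inv] at h5
        exact h5.symm
  rw [key]
  exact hΨ.isOpen_inter_preimage hOopen hA

lemma mem_mulSet_inv {A B : Set G.Arr} {z : G.Arr} (hz : z ∈ mulSet G A B) :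
    G.inv z ∈ mulSet G (G.inv '' B) (G.inv '' A) := by
  obtain ⟨a, ha, b, hb, hco, rfl⟩ := mem_mulSet.1 hz
  refine mem_mulSet.2 ⟨G.inv b, ⟨b, hb, rfl⟩, G.inv a, ⟨a, ha, rfl⟩, ?_, ?_⟩
  · rw [G.d_inv, G.r_inv, hco]
  · exact inv_comp_eq hco

lemma mulSet_injOn_d {A B : Set G.Arr} (hA : Set.InjOn G.d A) (hB : Set.InjOn G.d B) :
    Set.InjOn G.d (mulSet G A B) := by
  intro z1 h1 z2 h2 hd
  obtain ⟨a1, ha1, b1, hb1, hco1, rfl⟩ := mem_mulSet.1 h1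
  obtain ⟨a2, ha2, b2, hb2, hco2, rfl⟩ := mem_mulSet.1 h2
  rw [G.d_comp _ _ hco1, G.d_comp _ _ hco2] at hd
  have hbeq : b1 = b2 := hB hb1 hb2 hd
  subst hbeq
  have haeq : a1 = a2 := hA ha1 ha2 (by rw [hco1, hco2])
  rw [haeq]

end EtaleGroupoid
namespace EtaleGroupoid

variable {G : EtaleGroupoid} {R : Type} [CommRing R]

lemma algebraSet_repr {f : G.Arr → R} (hf : f ∈ G.AlgebraSet R) :
    ∃ (n : ℕ) (c : Fin n → R) (U : Fin n → Set G.Arr),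
      (∀ i, IsCompact (U i)) ∧ (∀ i, IsOpen (U i)) ∧
      ∀ x, f x = ∑ i, c i * chi R (U i) x := by
  have hf' : f ∈ Submodule.span R {f : G.Arr → R | ∃ U : Set G.Arr,
      IsCompact U ∧ IsOpen U ∧ f = Set.indicator U fun _ => (1 : R)} := hf
  rw [Submodule.mem_span_set'] at hf'
  obtain ⟨n, c, gsel, hsum⟩ := hf'
  have hU : ∀ i : Fin n, ∃ U : Set G.Arr, IsCompact U ∧ IsOpen U ∧
      (gsel i).val = Set.indicator U fun _ => (1 : R) := fun i => (gsel i).2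
  choose U hUc hUo hUeq using hU
  refine ⟨n, c, U, hUc, hUo, fun x => ?_⟩
  rw [← hsum, Finset.sum_apply]
  refine Finset.sum_congr rfl fun i _ => ?_
  rw [Pi.smul_apply, smul_eq_mul, hUeq i]
  rfl

lemma algebraSet_locally_const [T2Space G.Arr] {f : G.Arr → R}
    (hf : f ∈ G.AlgebraSet R) (x : G.Arr) :
    ∃ M, IsOpen M ∧ x ∈ M ∧ ∀ y ∈ M, f y = f x := by
  classical
  obtain ⟨n, c, U, hUc, hUo, hfx⟩ := algebraSet_repr hf
  set M := ⋂ i : Fin n, (if x ∈ U i then U i else (U i)ᶜ) with hM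
  have hMo : IsOpen M := by
    refine isOpen_iInter_of_finite fun i => ?_
    split_ifs with h
    · exact hUo i
    · exact ((hUc i).isClosed).isOpen_compl
  have hxM : x ∈ M := by
    refine Set.mem_iInter.2 fun i => ?_
    split_ifs with h
    · exact h
    · exact h
  refine ⟨M, hMo, hxM, fun y hy => ?_⟩
  rw [hfx, hfx]
  refine Finset.sum_congr rfl fun i _ => ?_
  have hyi := Set.mem_iInter.1 hy i
  by_cases h : x ∈ U i
  · rw [if_pos h] at hyi; rw [chi_apply_mem h, chi_apply_mem hyi]
  · rw [if_neg h] at hyi; rw [chi_apply_not_mem h, chi_apply_not_mem hyi]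

lemma algebraSet_support [T2Space G.Arr] {f : G.Arr → R} (hf : f ∈ G.AlgebraSet R) :
    IsOpen {x | f x ≠ 0} ∧ IsClosed {x | f x ≠ 0} ∧ IsCompact {x | f x ≠ 0} := by
  have hopen : IsOpen {x | f x ≠ 0} := by
    refine isOpen_iff_forall_mem_open.2 fun x hx => ?_
    obtain ⟨M, hMo, hxM, hMconst⟩ := algebraSet_locally_const hf x
    exact ⟨M, fun y hy => by rw [Set.mem_setOf_eq, hMconst y hy]; exact hx, hMo, hxM⟩
  have hclosed : IsClosed {x | f x ≠ 0} := by
    rw [← isOpen_compl_iff]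
    refine isOpen_iff_forall_mem_open.2 fun x hx => ?_
    obtain ⟨M, hMo, hxM, hMconst⟩ := algebraSet_locally_const hf x
    refine ⟨M, fun y hy => ?_, hMo, hxM⟩
    simp only [Set.mem_compl_iff, Set.mem_setOf_eq, not_not] at hx ⊢
    rw [hMconst y hy]; exact hx
  refine ⟨hopen, hclosed, ?_⟩
  obtain ⟨n, c, U, hUc, hUo, hfx⟩ := algebraSet_repr hf
  refine IsCompact.of_isClosed_subset (isCompact_iUnion fun i => hUc i) hclosed ?_
  intro x hx
  by_contra hcon
  rw [Set.mem_iUnion] at hcon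
  push_neg at hcon
  refine hx ?_
  show f x = 0
  rw [hfx]
  refine Finset.sum_eq_zero fun i _ => ?_
  rw [chi_apply_not_mem (hcon i), mul_zero]

lemma isBis_empty : G.IsBis ∅ := by
  refine ⟨isCompact_empty, isOpen_empty, ?_, ?_, ?_, ?_⟩
  · intro x hx; exact absurd hx (Set.notMem_empty x)
  · intro x hx; exact absurd hx (Set.notMem_empty x)
  · intro V hV hVo
    rw [Set.subset_empty_iff] at hV
    rw [hV, Set.image_empty]; exact isOpen_empty
  · intro V hV hVo
    rw [Set.subset_empty_iff] at hV
    rw [hV, Set.image_empty]; exact isOpen_empty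

lemma squeeze_one [T2Space G.Arr] (heff : G.Effective) {W C : Set G.Arr}
    (hWu : W ⊆ G.units) (hWo : IsOpen W) (hWne : W.Nonempty)
    (hC : G.IsBis C) (hCu : ∀ γ ∈ C, γ ∉ G.units) :
    ∃ W', W' ⊆ W ∧ IsOpen W' ∧ W'.Nonempty ∧
      ∀ γ ∈ C, ¬(G.d γ ∈ W' ∧ G.r γ ∈ W') := by
  by_cases hcase : ∃ γ ∈ C, G.d γ ∈ W ∧ G.d γ ≠ G.r γ
  · obtain ⟨γ, hγC, hγW, hγne⟩ := hcase
    obtain ⟨V₁, V₂, hV₁o, hV₂o, hdV₁, hrV₂, hdisj⟩ := t2_separation hγne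
    set Ω := (G.d '' C)ᶜ ∪ G.d '' (C ∩ G.r ⁻¹' V₂) with hΩ
    have hΩo : IsOpen Ω := by
      refine IsOpen.union ?_ ?_
      · exact (hC.1.image G.continuous_d).isClosed.isOpen_compl
      · exact hC.2.2.2.2.1 _ Set.inter_subset_left
          (hC.2.1.inter (hV₂o.preimage G.continuous_r))
    refine ⟨W ∩ V₁ ∩ Ω, fun y hy => hy.1.1, (hWo.inter hV₁o).inter hΩo,
      ⟨G.d γ, ⟨hγW, hdV₁⟩, Or.inr ⟨γ, ⟨hγC, hrV₂⟩, rfl⟩⟩, ?_⟩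
    rintro γ' hγ'C ⟨hd', hr'⟩
    rcases hd'.2 with h | h
    · exact h ⟨γ', hγ'C, rfl⟩
    · obtain ⟨γ'', ⟨hγ''C, hγ''V₂⟩, hdd⟩ := h
      have heq : γ'' = γ' := hC.2.2.1 hγ''C hγ'C hdd
      subst heq
      exact Set.disjoint_left.1 hdisj hr'.1.2 hγ''V₂
  · push_neg at hcase
    refine ⟨W, subset_rfl, hWo, hWne, ?_⟩
    rintro γ hγC ⟨hd, hr⟩
    have hiso : C ∩ G.d ⁻¹' W ⊆ {g : G.Arr | G.d g = G.r g} := fun g hg =>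
      hcase g hg.1 hg.2
    have hopen : IsOpen (C ∩ G.d ⁻¹' W) := hC.2.1.inter (hWo.preimage G.continuous_d)
    have hsub : C ∩ G.d ⁻¹' W ⊆ G.units := by
      rw [← heff]
      exact interior_maximal hiso hopen
    exact hCu γ hγC (hsub ⟨hγC, hd⟩)

lemma squeeze_list [T2Space G.Arr] (heff : G.Effective) :
    ∀ l : List (Set G.Arr), (∀ C ∈ l, G.IsBis C ∧ ∀ γ ∈ C, γ ∉ G.units) →
    ∀ W : Set G.Arr, W ⊆ G.units → IsOpen W → W.Nonempty →
    ∃ W', W' ⊆ W ∧ IsOpen W' ∧ W'.Nonempty ∧ W' ⊆ G.units ∧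
      ∀ C ∈ l, ∀ γ ∈ C, ¬(G.d γ ∈ W' ∧ G.r γ ∈ W')
  | [], _, W, hWu, hWo, hWne => ⟨W, subset_rfl, hWo, hWne, hWu, by simp⟩
  | C :: l, hl, W, hWu, hWo, hWne => by
    obtain ⟨W1, hW1W, hW1o, hW1ne, hprop⟩ := squeeze_one heff hWu hWo hWne
      (hl C (List.mem_cons_self)).1 (hl C (List.mem_cons_self)).2
    obtain ⟨W', h1, h2, h3, h4, h5⟩ := squeeze_list heff l
      (fun D hD => hl D (List.mem_cons_of_mem C hD))
      W1 (fun y hy => hWu (hW1W hy)) hW1o hW1ne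
    refine ⟨W', h1.trans hW1W, h2, h3, h4, ?_⟩
    intro D hD
    rcases List.mem_cons.1 hD with rfl | hD'
    · intro γ hγ hcon
      exact hprop γ hγ ⟨h1 hcon.1, h1 hcon.2⟩
    · exact h5 D hD'

lemma cover_by_bis [T2Space G.Arr] (hample : G.Ample) (heff : G.Effective)
    {N : Set G.Arr} (hNc : IsCompact N) (hNo : IsOpen N)
    (hNu : ∀ γ ∈ N, γ ∉ G.units) :
    ∃ l : List (Set G.Arr), (∀ C ∈ l, G.IsBis C ∧ ∀ γ ∈ C, γ ∉ G.units) ∧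
      ∀ γ ∈ N, ∃ C ∈ l, γ ∈ C := by
  have hch : ∀ γ : G.Arr, ∃ B : Set G.Arr, G.IsBis B ∧ B ⊆ N ∧ (γ ∈ N → γ ∈ B) := by
    intro γ
    by_cases h : γ ∈ N
    · obtain ⟨B, h1, h2, h3⟩ := exists_isBis_basis hample heff hNo h
      exact ⟨B, h1, h3, fun _ => h2⟩
    · exact ⟨∅, isBis_empty, Set.empty_subset N, fun h' => absurd h' h⟩
  choose Bf hBis hBsub hBmem using hch
  obtain ⟨t, ht⟩ := hNc.elim_finite_subcover Bf (fun γ => (hBis γ).2.1)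
    (fun γ hγ => Set.mem_iUnion.2 ⟨γ, hBmem γ hγ⟩)
  refine ⟨t.toList.map Bf, ?_, ?_⟩
  · intro C hC
    obtain ⟨i, -, rfl⟩ := List.mem_map.1 hC
    exact ⟨hBis i, fun γ hγ => hNu γ (hBsub i hγ)⟩
  · intro γ hγ
    obtain ⟨i, hit, hiB⟩ := Set.mem_iUnion₂.1 (ht hγ)
    exact ⟨Bf i, List.mem_map.2 ⟨i, Finset.mem_toList.2 hit, rfl⟩, hiB⟩

end EtaleGroupoid
namespace EtaleGroupoid

variable {G : EtaleGroupoid} {R : Type} [CommRing R]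

lemma conv_chi_bis_right_eq {F : G.Arr → R} {B : Set G.Arr} (hinj : Set.InjOn G.d B)
    {x b : G.Arr} (hb : b ∈ B) (hd : G.d b = G.d x) :
    G.conv F (chi R B) x = F (G.comp x (G.inv b)) := by
  rw [conv_eq_single hd ?_, chi_apply_mem hb, mul_one]
  intro h hh hterm
  have hmem : h ∈ B := mem_of_chi_ne_zero fun h0 => hterm (by rw [h0, mul_zero])
  exact hinj hmem hb (by rw [hh, hd])

lemma conv_chi_bis_right_eq_zero {F : G.Arr → R} {B : Set G.Arr} {x : G.Arr}
    (hno : ∀ b ∈ B, G.d b ≠ G.d x) :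
    G.conv F (chi R B) x = 0 :=
  conv_eq_zero_at fun h hh => by
    rw [chi_apply_not_mem fun hmem => hno h hmem hh, mul_zero]

lemma conv_chi_bis_left_eq {F : G.Arr → R} {B : Set G.Arr} (hinj : Set.InjOn G.r B)
    {x w : G.Arr} (hw : w ∈ B) (hr : G.r w = G.r x) :
    G.conv (chi R B) F x = F (G.comp (G.inv w) x) := by
  have hco : G.d (G.inv w) = G.r x := by rw [G.d_inv, hr]
  have hd0 : G.d (G.comp (G.inv w) x) = G.d x := G.d_comp _ _ hco
  rw [conv_eq_single hd0 ?_]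
  · have h1 : G.comp x (G.inv (G.comp (G.inv w) x)) = w := by
      rw [inv_comp_eq hco, G.inv_inv]
      have h2 := inv_comp_cancel_left (w := G.inv x) (z := w) (by rw [G.d_inv, hr])
      rwa [G.inv_inv] at h2
    rw [h1, chi_apply_mem hw, one_mul]
  · intro h hh hterm
    have hmem : G.comp x (G.inv h) ∈ B :=
      mem_of_chi_ne_zero (R := R) fun h0 => hterm (by rw [h0, zero_mul])
    have hco2 : G.d x = G.r (G.inv h) := by rw [G.r_inv, hh]
    have hrw' : G.r (G.comp x (G.inv h)) = G.r x := G.r_comp _ _ hco2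
    have heqw : G.comp x (G.inv h) = w := hinj hmem hw (by rw [hrw', hr])
    rw [← heqw, inv_comp_eq hco2, G.inv_inv]
    have h3 := comp_inv_cancel_right (z := h) (w := G.inv x)
      (by rw [G.r_inv]; exact hh)
    rw [G.inv_inv] at h3
    exact h3.symm

lemma conv_chi_bis_left_eq_zero {F : G.Arr → R} {B : Set G.Arr} {x : G.Arr}
    (hno : ∀ w ∈ B, G.r w ≠ G.r x) :
    G.conv (chi R B) F x = 0 :=
  conv_eq_zero_at fun h hh => by
    rw [chi_apply_not_mem fun hmem =>
      hno _ hmem (G.r_comp _ _ (by rw [G.r_inv, hh])), zero_mul]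

lemma isOpenMap_d : IsOpenMap G.d := by
  intro V hV
  refine isOpen_iff_forall_mem_open.2 ?_
  rintro u ⟨x, hxV, rfl⟩
  obtain ⟨U, hUo, hxU, hUi, hUd⟩ := G.etale x
  refine ⟨G.d '' (V ∩ U), Set.image_mono Set.inter_subset_left,
    hUd _ Set.inter_subset_right (hV.inter hUo), ⟨x, ⟨hxV, hxU⟩, rfl⟩⟩

lemma isOpenMap_r : IsOpenMap G.r := by
  intro V hV
  have : G.r '' V = G.d '' (G.inv '' V) := (d_image_inv V).symm
  rw [this]
  refine isOpenMap_d _ ?_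
  rw [inv_image_eq_preimage]
  exact hV.preimage G.continuous_inv

/-- localization of a non-zero algebra element on the `g`-side -/
lemma localize_g [T2Space G.Arr] (hample : G.Ample) (heff : G.Effective)
    {g : G.Arr → R} (hg : g ∈ G.AlgebraSet R) (hgne : g ≠ 0) :
    ∃ (b : R) (B W : Set G.Arr), b ≠ 0 ∧ G.IsBis B ∧ (∀ β ∈ B, g β = b) ∧
      W ⊆ G.d '' B ∧ IsOpen W ∧ W.Nonempty ∧ W ⊆ G.units ∧
      (∀ x, G.conv (chi R (G.inv '' B)) g x ≠ 0 → G.d x ∈ W → G.r x ∈ W →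
        x ∈ G.units) := by
  obtain ⟨x₂, hx₂⟩ := Function.ne_iff.mp hgne
  rw [Pi.zero_apply] at hx₂
  obtain ⟨M, hMo, hxM, hMc⟩ := algebraSet_locally_const hg x₂
  obtain ⟨B, hB, hxB, hBM⟩ := exists_isBis_basis hample heff hMo hxM
  have hgB : ∀ β ∈ B, g β = g x₂ := fun β hβ => hMc β (hBM hβ)
  obtain ⟨hS₀o, hS₀c, hS₀cpt⟩ := algebraSet_support hg
  set S₀ := {x : G.Arr | g x ≠ 0} with hS₀
  set G₂ := G.conv (chi R (G.inv '' B)) g with hG₂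
  have hBinvr : Set.InjOn G.r (G.inv '' B) := (hB.inv).2.2.2.1
  -- support identification
  have hT : {x : G.Arr | G₂ x ≠ 0} = mulSet G (G.inv '' B) S₀ := by
    ext x
    constructor
    · intro hx
      by_cases hex : ∃ w ∈ G.inv '' B, G.r w = G.r x
      · obtain ⟨w, hwB, hwr⟩ := hex
        have hval : G₂ x = g (G.comp (G.inv w) x) := conv_chi_bis_left_eq hBinvr hwB hwr
        refine mem_mulSet.2 ⟨w, hwB, G.comp (G.inv w) x, ?_, ?_, ?_⟩
        · rw [hS₀, Set.mem_setOf_eq, ← hval]; exact hx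
        · rw [G.r_comp _ _ (by rw [G.d_inv, hwr]), G.r_inv]
        · have h4 := inv_comp_cancel_left (w := G.inv w) (z := x)
            (by rw [G.d_inv, hwr])
          rw [G.inv_inv] at h4
          exact h4.symm
      · push_neg at hex
        exact absurd (conv_chi_bis_left_eq_zero hex) hx
    · intro hx
      obtain ⟨w, hwB, z, hz, hco, rfl⟩ := mem_mulSet.1 hx
      have hwr : G.r w = G.r (G.comp w z) := (G.r_comp _ _ hco).symm
      have hval : G₂ (G.comp w z) = g (G.comp (G.inv w) (G.comp w z)) :=
        conv_chi_bis_left_eq hBinvr hwB hwr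
      rw [Set.mem_setOf_eq, hval, inv_comp_cancel_left hco]
      exact hz
  have hTcpt : IsCompact {x : G.Arr | G₂ x ≠ 0} := by
    rw [hT]
    exact mulSet_compact (hB.1.image G.continuous_inv) hS₀cpt
  have hTopen : IsOpen {x : G.Arr | G₂ x ≠ 0} := by
    rw [hT]
    have hiff : mulSet G (G.inv '' B) S₀
        = G.inv ⁻¹' (mulSet G (G.inv '' S₀) B) := by
      ext x
      constructor
      · intro hx
        have := mem_mulSet_inv hx
        rwa [image_inv_inv] at this
      · intro hx
        have := mem_mulSet_inv hx
        rw [image_inv_inv] at this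
        obtain ⟨w, hw, z, hz, hco, heq⟩ := mem_mulSet.1 this
        rw [G.inv_inv] at heq
        exact heq ▸ mem_mulSet.2 ⟨w, hw, z, hz, hco, rfl⟩
    rw [hiff]
    refine IsOpen.preimage G.continuous_inv ?_
    refine mulSet_isOpen_right ?_ hB
    rw [inv_image_eq_preimage]
    exact hS₀o.preimage G.continuous_inv
  -- the non-unit part of the support
  set N := {x : G.Arr | G₂ x ≠ 0} ∩ (G.units)ᶜ with hN
  have hNcpt : IsCompact N := hTcpt.inter_right (isOpen_units heff).isClosed_compl
  have hNopen : IsOpen N := hTopen.inter (isClosed_units).isOpen_compl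
  have hNu : ∀ γ ∈ N, γ ∉ G.units := fun γ hγ => hγ.2
  obtain ⟨l, hl, hlcov⟩ := cover_by_bis hample heff hNcpt hNopen hNu
  -- squeeze
  have hW₀o : IsOpen (G.d '' B) := hB.2.2.2.2.1 B subset_rfl hB.2.1
  have hW₀u : G.d '' B ⊆ G.units := d_image_subset_units B
  obtain ⟨W, hWsub, hWo, hWne, hWu, hWprop⟩ := squeeze_list heff l hl (G.d '' B)
    hW₀u hW₀o ⟨G.d x₂, ⟨x₂, hxB, rfl⟩⟩
  refine ⟨g x₂, B, W, hx₂, hB, hgB, hWsub, hWo, hWne, hWu, ?_⟩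
  intro x hxG₂ hdx hrx
  by_contra hxu
  obtain ⟨C, hCl, hxC⟩ := hlcov x ⟨hxG₂, hxu⟩
  exact hWprop C hCl x hxC ⟨hdx, hrx⟩

end EtaleGroupoid
namespace EtaleGroupoid

variable {G : EtaleGroupoid} {R : Type} [CommRing R]

theorem algPrime_backward [T2Space G.Arr] (hample : G.Ample) (heff : G.Effective)
    (hne : G.units.Nonempty) (hdom : IsDomain R) (htrans : G.TopTransitive) :
    G.AlgPrime R := by
  constructor
  · obtain ⟨u0, hu0⟩ := hne
    obtain ⟨K, -, huK, hKc, hKu, hKo⟩ := exists_compact_open hample heff unitsOpen_units hu0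
    refine ⟨chi R K, chi_mem_algebraSet hKc hKo, fun h0 => ?_⟩
    have := congrFun h0 u0
    rw [chi_apply_mem huK] at this
    exact one_ne_zero this
  · intro f hf g hg hzero
    by_contra hcon
    push_neg at hcon
    obtain ⟨hfne, hgne⟩ := hcon
    -- f-side: a bisection on which f is a non-zero constant
    obtain ⟨x₁, hx₁⟩ := Function.ne_iff.mp hfne
    rw [Pi.zero_apply] at hx₁
    obtain ⟨M₁, hM₁o, hxM₁, hM₁c⟩ := algebraSet_locally_const hf x₁
    obtain ⟨B₁, hB₁, hx₁B₁, hB₁M⟩ := exists_isBis_basis hample heff hM₁o hxM₁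
    have hfB₁ : ∀ β ∈ B₁, f β = f x₁ := fun β hβ => hM₁c β (hB₁M hβ)
    -- g-side localization
    obtain ⟨b, B₂, Wg, hbne, hB₂, hgB₂, hWgd, hWgo, hWgne, hWgu, hsq⟩ :=
      localize_g hample heff hg hgne
    -- the saturation of Wg is open, invariant and non-empty
    set Sat := G.r '' (G.d ⁻¹' Wg) with hSat
    have hSatOpen : IsOpen Sat := isOpenMap_r _ (hWgo.preimage G.continuous_d)
    have hSatU : G.UnitsOpen Sat :=
      unitsOpen_of_isOpen (r_image_subset_units _) hSatOpen
    have hSatInv : G.Invariant Sat := by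
      intro γ hγ
      obtain ⟨δ, hδ, hδr⟩ := hγ
      rw [Set.mem_preimage] at hδ
      have hco : G.d γ = G.r δ := hδr.symm
      refine ⟨G.comp γ δ, ?_, G.r_comp _ _ hco⟩
      rw [Set.mem_preimage, G.d_comp _ _ hco]
      exact hδ
    have hSatNe : Sat.Nonempty := by
      obtain ⟨u, hu⟩ := hWgne
      have humem : u ∈ G.d ⁻¹' Wg := by
        rw [Set.mem_preimage, d_of_unit (hWgu hu)]
        exact hu
      have h7 : G.r u ∈ Sat := Set.mem_image_of_mem G.r humem
      rw [r_of_unit (hWgu hu)] at h7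
      exact ⟨u, h7⟩
    have hdense := htrans Sat hSatU hSatInv hSatNe
    -- r '' B₁ is a non-empty open subset of the unit space meeting Sat
    have hrB₁o : IsOpen (G.r '' B₁) := hB₁.2.2.2.2.2 B₁ subset_rfl hB₁.2.1
    have hmeet : ((Subtype.val ⁻¹' (G.r '' B₁) : Set ↥G.units)
        ∩ (Subtype.val ⁻¹' Sat : Set ↥G.units)).Nonempty := by
      refine Dense.inter_open_nonempty hdense _
        (hrB₁o.preimage continuous_subtype_val) ?_
      exact ⟨⟨G.r x₁, r_mem_units x₁⟩, ⟨x₁, hx₁B₁, rfl⟩⟩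
    obtain ⟨⟨u₁, hu₁units⟩, hu₁B, hu₁Sat⟩ := hmeet
    obtain ⟨γ₀, hγ₀d, hγ₀r⟩ := hu₁Sat
    rw [Set.mem_preimage] at hγ₀d
    -- a bisection D around γ₀ with d '' D ⊆ Wg and r '' D ⊆ r '' B₁
    have hOo : IsOpen (G.d ⁻¹' Wg ∩ G.r ⁻¹' (G.r '' B₁)) :=
      (hWgo.preimage G.continuous_d).inter (hrB₁o.preimage G.continuous_r)
    have hγ₀mem : γ₀ ∈ G.d ⁻¹' Wg ∩ G.r ⁻¹' (G.r '' B₁) := by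
      refine ⟨hγ₀d, ?_⟩
      rw [Set.mem_preimage, hγ₀r]
      exact hu₁B
    obtain ⟨D, hD, hγ₀D, hDsub⟩ := exists_isBis_basis hample heff hOo hγ₀mem
    -- the product bisection C
    set C := mulSet G (mulSet G (G.inv '' B₁) D) (G.inv '' B₂) with hC
    have hCc : IsCompact C :=
      mulSet_compact (mulSet_compact (hB₁.1.image G.continuous_inv) hD.1)
        (hB₂.1.image G.continuous_inv)
    have hCo : IsOpen C :=
      mulSet_isOpen_right (mulSet_isOpen_right (hB₁.inv).2.1 hD) hB₂.inv
    have hCinj : Set.InjOn G.d C :=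
      mulSet_injOn_d (mulSet_injOn_d (hB₁.inv).2.2.1 hD.2.2.1) (hB₂.inv).2.2.1
    -- the distinguished arrows
    have hdγ₀Wg : G.d γ₀ ∈ Wg := hγ₀d
    obtain ⟨β₂s, hβ₂sB, hβ₂sd⟩ := hWgd hdγ₀Wg
    obtain ⟨β₁s, hβ₁sB, hβ₁sr⟩ : ∃ β ∈ B₁, G.r β = G.r γ₀ := by
      obtain ⟨β, hβ, hβr⟩ := hu₁B
      exact ⟨β, hβ, by rw [hβr, hγ₀r]⟩
    -- key composability facts
    have hco1 : G.d (G.inv β₁s) = G.r γ₀ := by rw [G.d_inv, hβ₁sr]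
    set m₀ := G.comp (G.inv β₁s) γ₀ with hm₀
    have hm₀mem : m₀ ∈ mulSet G (G.inv '' B₁) D :=
      mem_mulSet.2 ⟨G.inv β₁s, ⟨β₁s, hβ₁sB, rfl⟩, γ₀, hγ₀D, hco1, rfl⟩
    have hdm₀ : G.d m₀ = G.d γ₀ := G.d_comp _ _ hco1
    have hco2 : G.d m₀ = G.r (G.inv β₂s) := by rw [hdm₀, G.r_inv, hβ₂sd]
    set c₀ := G.comp m₀ (G.inv β₂s) with hc₀
    have hc₀mem : c₀ ∈ C :=
      mem_mulSet.2 ⟨m₀, hm₀mem, G.inv β₂s, ⟨β₂s, hβ₂sB, rfl⟩, hco2, rfl⟩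
    set y₀ := G.comp γ₀ (G.inv β₂s) with hy₀
    have hcoy : G.d γ₀ = G.r (G.inv β₂s) := by rw [G.r_inv, hβ₂sd]
    have hdc₀ : G.d c₀ = G.d y₀ := by
      rw [G.d_comp _ _ hco2, G.d_comp _ _ hcoy]
    -- the main evaluation
    have hval : G.conv (G.conv f (chi R C)) g γ₀ = f x₁ * b := by
      rw [conv_eq_single (h₀ := β₂s) hβ₂sd ?_]
      · -- value of the single term
        have h1 : G.conv f (chi R C) y₀ = f (G.comp y₀ (G.inv c₀)) :=
          conv_chi_bis_right_eq hCinj hc₀mem hdc₀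
        have hstep1 : G.comp β₁s m₀ = γ₀ := by
          rw [hm₀]
          have := inv_comp_cancel_left (w := G.inv β₁s) (z := γ₀) hco1
          rwa [G.inv_inv] at this
        have hrc₀ : G.d β₁s = G.r c₀ := by
          rw [hc₀, G.r_comp _ _ hco2, hm₀, G.r_comp _ _ hco1, G.r_inv]
        have hstep2 : G.comp β₁s c₀ = y₀ := by
          rw [hc₀, ← G.comp_assoc β₁s m₀ (G.inv β₂s)
            (by rw [hm₀, G.r_comp _ _ hco1, G.r_inv]) hco2, hstep1]
        have h2 : G.comp y₀ (G.inv c₀) = β₁s := by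
          rw [← hstep2]
          exact comp_inv_cancel_right hrc₀
        show G.conv f (chi R C) (G.comp γ₀ (G.inv β₂s)) * g β₂s = f x₁ * b
        rw [← hy₀, h1, h2, hfB₁ β₁s hβ₁sB, hgB₂ β₂s hβ₂sB]
      · -- uniqueness of the non-vanishing term
        intro k hk hterm
        have hgk : g k ≠ 0 := fun h0 => hterm (by rw [h0, mul_zero])
        have hfk : G.conv f (chi R C) (G.comp γ₀ (G.inv k)) ≠ 0 :=
          fun h0 => hterm (by rw [h0, zero_mul])
        set y := G.comp γ₀ (G.inv k) with hy
        have hdy : G.d y = G.r k := by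
          rw [hy, G.d_comp _ _ (by rw [G.r_inv, hk]), G.d_inv]
        have hex : ∃ c ∈ C, G.d c = G.d y := by
          by_contra hno
          push_neg at hno
          exact hfk (conv_chi_bis_right_eq_zero hno)
        obtain ⟨c, hcC, hcdy⟩ := hex
        obtain ⟨m, hm, w, hw, hcomw, rfl⟩ := mem_mulSet.1 hcC
        obtain ⟨β₂, hβ₂B, rfl⟩ := hw
        obtain ⟨hβ, hhβ, δ, hδD, hcohδ, rfl⟩ := mem_mulSet.1 hm
        -- facts
        have hdc : G.d (G.comp (G.comp hβ δ) (G.inv β₂)) = G.r β₂ := by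
          rw [G.d_comp _ _ hcomw, G.d_inv]
        have hrβ₂k : G.r β₂ = G.r k := by rw [← hdc, hcdy, hdy]
        have hdβ₂δ : G.d β₂ = G.d δ := by
          have := G.d_comp _ _ hcohδ
          rw [← G.r_inv β₂, ← hcomw, this]
        have hdδWg : G.d δ ∈ Wg := (hDsub hδD).1
        set x := G.comp (G.inv β₂) k with hx
        have hcoxk : G.d (G.inv β₂) = G.r k := by rw [G.d_inv, hrβ₂k]
        have hG₂x : G.conv (chi R (G.inv '' B₂)) g x = g k := by
          have hrx : G.r (G.inv β₂) = G.r x := (G.r_comp _ _ hcoxk).symm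
          rw [conv_chi_bis_left_eq (hB₂.inv).2.2.2.1 ⟨β₂, hβ₂B, rfl⟩ hrx]
          have h6 := inv_comp_cancel_left (w := G.inv β₂) (z := k) hcoxk
          rw [G.inv_inv] at h6
          rw [G.inv_inv, hx, h6]
        have hdx : G.d x ∈ Wg := by
          rw [hx, G.d_comp _ _ hcoxk, hk]
          exact hdγ₀Wg
        have hrx : G.r x ∈ Wg := by
          rw [hx, G.r_comp _ _ hcoxk, G.r_inv, hdβ₂δ]
          exact hdδWg
        have hxu : x ∈ G.units := hsq x (by rw [hG₂x]; exact hgk) hdx hrx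
        -- conclude k = β₂s
        have hkx : G.comp β₂ x = k := by
          have := inv_comp_cancel_left (w := G.inv β₂) (z := k) hcoxk
          rw [G.inv_inv] at this
          rw [hx]
          exact this
        have hxd : x = G.d β₂ := by
          rw [← r_of_unit hxu, hx, G.r_comp _ _ hcoxk, G.r_inv]
        have hkβ₂ : k = β₂ := by
          rw [← hkx, hxd, G.comp_unit_right]
        have hdd : G.d β₂ = G.d β₂s := by
          rw [← hkβ₂, hk, hβ₂sd]
        rw [hkβ₂]
        exact hB₂.2.2.1 hβ₂B hβ₂sB hdd
    have h0 := congrFun (hzero (chi R C) (chi_mem_algebraSet hCc hCo)) γ₀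
    rw [hval] at h0
    rcases mul_eq_zero.1 h0 with h | h
    · exact hx₁ h
    · exact hbne h

end EtaleGroupoid
/-- For an effective Hausdorff ample groupoid `G` (with non-empty
unit space), `RG` is prime iff `R` is an integral domain and `G` is
topologically transitive. -/
theorem stmt8 (R : Type) [CommRing R] (G : EtaleGroupoid) [T2Space G.Arr]
    (hample : G.Ample) (heff : G.Effective) (hne : G.units.Nonempty) :
    G.AlgPrime R ↔ IsDomain R ∧ G.TopTransitive := by
  constructor
  · exact fun hp => EtaleGroupoid.algPrime_forward hample heff hne hp
  · rintro ⟨hdom, htrans⟩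
    exact EtaleGroupoid.algPrime_backward hample heff hne hdom htrans
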